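/- Let A be an m×d real matrix, b ∈ ℝ^m, and D = {x ∈ ℝ^d : Ax ≤ b} be nonempty and compact. For τ > 0 define D_τ = {x ∈ ℝ^d : Ax + τ·𝟙 ≤ b}, assumed nonempty, and suppose ρ > 0 lower-bounds the smallest singular value of A_B for every d×d invertible submatrix A_B of A corresponding to d constraints meeting at an active point of D. Then for every x ∈ ℝ^d, dist(x, D_τ) ≤ dist(x, D) + (√d / ρ)·τ. -/

import Mathlib

open scoped RealInnerProductSpace

theorem cone_caratheodory {E : Type*} [AddCommGroup E] [Module ℝ E] {ι : Type*} [DecidableEq ι]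
    (v : ι → E) (t : Finset ι) (l : ι → ℝ) (hl : ∀ i ∈ t, 0 ≤ l i) :
    ∃ s ⊆ t, LinearIndependent ℝ (fun i : s => v i) ∧
      ∃ μ : ι → ℝ, (∀ i, 0 ≤ μ i) ∧ (∀ i ∉ s, μ i = 0) ∧
        ∑ i ∈ s, μ i • v i = ∑ i ∈ t, l i • v i := by
  classical
  induction t using Finset.strongInductionOn generalizing l with
  | _ t ih =>
  by_cases hli : LinearIndependent ℝ (fun i : t => v i)
  · refine ⟨t, subset_rfl, hli, fun i => if i ∈ t then l i else 0, ?_, ?_, ?_⟩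
    · intro i; dsimp only; split_ifs with h
      · exact hl i h
      · exact le_refl 0
    · intro i hi; simp [hi]
    · exact Finset.sum_congr rfl fun i hi => by simp [hi]
  · obtain ⟨g, hg0, i₁, hgi₁⟩ := Fintype.not_linearIndependent_iff.mp hli
    set G : ι → ℝ := fun i => if h : i ∈ t then g ⟨i, h⟩ else 0 with hG
    have hGsum : ∑ i ∈ t, G i • v i = 0 := by
      rw [← hg0, ← Finset.sum_coe_sort t (fun i => G i • v i)]
      exact Finset.sum_congr rfl fun i _ => by simp [hG, i.2]
    have key : ∃ H : ι → ℝ, (∑ i ∈ t, H i • v i = 0) ∧ ∃ i ∈ t, 0 < H i := by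
      rcases lt_trichotomy (G ↑i₁) 0 with h | h | h
      · exact ⟨-G, by simp only [Pi.neg_apply, neg_smul, Finset.sum_neg_distrib, hGsum,
          neg_zero], ↑i₁, i₁.2, by simpa using neg_pos.mpr h⟩
      · exfalso; apply hgi₁; have : G ↑i₁ = g i₁ := by simp [hG, i₁.2]
        rw [← this, h]
      · exact ⟨G, hGsum, ↑i₁, i₁.2, h⟩
    obtain ⟨H, hHsum, iH, hiHt, hiHpos⟩ := key
    set P : Finset ι := t.filter (fun i => 0 < H i) with hP
    have hPne : P.Nonempty := ⟨iH, by simp [hP, hiHt, hiHpos]⟩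
    obtain ⟨i₀, hi₀P, hmin⟩ := P.exists_min_image (fun i => l i / H i) hPne
    have hi₀t : i₀ ∈ t := (Finset.mem_filter.mp hi₀P).1
    have hi₀pos : 0 < H i₀ := (Finset.mem_filter.mp hi₀P).2
    set ratio : ℝ := l i₀ / H i₀ with hr
    have hratio : 0 ≤ ratio := div_nonneg (hl i₀ hi₀t) hi₀pos.le
    set l' : ι → ℝ := fun i => l i - ratio * H i with hl'def
    have hl' : ∀ i ∈ t.erase i₀, 0 ≤ l' i := by
      intro i hi
      have hit : i ∈ t := Finset.mem_of_mem_erase hi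
      by_cases hHi : 0 < H i
      · have : ratio ≤ l i / H i := hmin i (Finset.mem_filter.mpr ⟨hit, hHi⟩)
        have := (le_div_iff₀ hHi).mp this
        simp only [hl'def]; linarith
      · push_neg at hHi
        have : ratio * H i ≤ 0 := mul_nonpos_of_nonneg_of_nonpos hratio hHi
        have := hl i hit
        simp only [hl'def]; linarith
    have hl'i₀ : l' i₀ = 0 := by
      simp only [hl'def, hr]
      field_simp
      ring
    have hsum' : ∑ i ∈ t.erase i₀, l' i • v i = ∑ i ∈ t, l i • v i := by
      have h1 : ∑ i ∈ t, l' i • v i = ∑ i ∈ t, l i • v i := by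
        have : ∑ i ∈ t, l' i • v i
            = ∑ i ∈ t, l i • v i - ratio • ∑ i ∈ t, H i • v i := by
          rw [Finset.smul_sum, ← Finset.sum_sub_distrib]
          exact Finset.sum_congr rfl fun i _ => by
            simp [hl'def, sub_smul, smul_smul]
        rw [this, hHsum, smul_zero, sub_zero]
      rw [← h1]
      exact (Finset.sum_erase _ (by rw [hl'i₀, zero_smul]))
    obtain ⟨s, hs, hsli, μ, hμ0, hμz, hμsum⟩ := ih (t.erase i₀) (Finset.erase_ssubset hi₀t) l' hl'
    exact ⟨s, hs.trans (Finset.erase_subset _ _), hsli, μ, hμ0, hμz, by rw [hμsum, hsum']⟩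

theorem isClosed_cone_of_li {E : Type*} [NormedAddCommGroup E] [NormedSpace ℝ E]
    [FiniteDimensional ℝ E] {ι : Type*} [Fintype ι] [DecidableEq ι] (v : ι → E) (s : Finset ι)
    (hs : LinearIndependent ℝ (fun i : s => v i)) :
    IsClosed {x : E | ∃ μ : ι → ℝ, (∀ i, 0 ≤ μ i) ∧ (∀ i ∉ s, μ i = 0) ∧
      ∑ i ∈ s, μ i • v i = x} := by
  classical
  let L : (↥s → ℝ) →ₗ[ℝ] E :=
    { toFun := fun c => ∑ i : s, c i • v ↑i
      map_add' := fun c c' => by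
        simp [add_smul, Finset.sum_add_distrib]
      map_smul' := fun r c => by
        simp [smul_smul, Finset.smul_sum] }
  have hLinj : LinearMap.ker L = ⊥ := by
    rw [LinearMap.ker_eq_bot']
    intro c hc
    have := Fintype.linearIndependent_iff.mp hs c hc
    funext i; exact this i
  have hemb := LinearMap.isClosedEmbedding_of_injective hLinj
  have hset : {x : E | ∃ μ : ι → ℝ, (∀ i, 0 ≤ μ i) ∧ (∀ i ∉ s, μ i = 0) ∧
      ∑ i ∈ s, μ i • v i = x} = L '' {c | ∀ i, 0 ≤ c i} := by
    ext x
    constructor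
    · rintro ⟨μ, hμ0, hμz, rfl⟩
      refine ⟨fun i => μ ↑i, fun i => hμ0 ↑i, ?_⟩
      show ∑ i : s, μ ↑i • v ↑i = _
      rw [Finset.sum_coe_sort s (fun i => μ i • v i)]
    · rintro ⟨c, hc, rfl⟩
      refine ⟨fun i => if h : i ∈ s then c ⟨i, h⟩ else 0, ?_, ?_, ?_⟩
      · intro i; dsimp only; split_ifs with h
        · exact hc ⟨i, h⟩
        · exact le_refl 0
      · intro i hi; simp [hi]
      · show _ = ∑ i : s, c i • v ↑i
        rw [← Finset.sum_coe_sort s (fun i => (if h : i ∈ s then c ⟨i, h⟩ else 0) • v i)]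
        exact Finset.sum_congr rfl fun i _ => by simp [i.2]
  rw [hset]
  apply hemb.isClosedMap
  have : {c : ↥s → ℝ | ∀ i, 0 ≤ c i} = ⋂ i, {c | 0 ≤ c i} := by
    ext c; simp [Set.mem_iInter]
  rw [this]
  exact isClosed_iInter fun i => isClosed_le continuous_const (continuous_apply i)

theorem farkas_cone {dd : ℕ} {ι : Type*} [Fintype ι] [DecidableEq ι]
    (v : ι → EuclideanSpace ℝ (Fin dd)) (I : Finset ι) (u : EuclideanSpace ℝ (Fin dd))
    (h : ∀ y : EuclideanSpace ℝ (Fin dd), (∀ i ∈ I, ⟪v i, y⟫ ≤ 0) → ⟪u, y⟫ ≤ 0) :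
    ∃ μ : ι → ℝ, (∀ i, 0 ≤ μ i) ∧ (∀ i ∉ I, μ i = 0) ∧ ∑ i ∈ I, μ i • v i = u := by
  classical
  let E := EuclideanSpace ℝ (Fin dd)
  set carrier : Set E := {x | ∃ μ : ι → ℝ, (∀ i, 0 ≤ μ i) ∧ (∀ i ∉ I, μ i = 0) ∧
    ∑ i ∈ I, μ i • v i = x} with hcar
  have hzero : (0 : E) ∈ carrier := ⟨0, fun i => le_refl 0, fun i _ => rfl, by simp⟩
  let K : ConvexCone ℝ E :=
    { carrier := carrier
      smul_mem' := by
        rintro c hc x ⟨μ, hμ0, hμz, rfl⟩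
        refine ⟨c • μ, fun i => mul_nonneg hc.le (hμ0 i), fun i hi => by simp [hμz i hi], ?_⟩
        rw [Finset.smul_sum]
        refine Finset.sum_congr rfl fun i _ => ?_
        simp [Pi.smul_apply, smul_smul]
      add_mem' := by
        rintro x ⟨μ, hμ0, hμz, rfl⟩ y ⟨ν, hν0, hνz, rfl⟩
        refine ⟨μ + ν, fun i => add_nonneg (hμ0 i) (hν0 i),
          fun i hi => by simp [hμz i hi, hνz i hi], ?_⟩
        rw [← Finset.sum_add_distrib]
        refine Finset.sum_congr rfl fun i _ => ?_
        simp [Pi.add_apply, add_smul] }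
  have hKclosed : IsClosed (K : Set E) := by
    have hdecomp : (K : Set E) = ⋃ s ∈ {s : Finset ι | s ⊆ I ∧
        LinearIndependent ℝ (fun i : s => v i)},
        {x : E | ∃ μ : ι → ℝ, (∀ i, 0 ≤ μ i) ∧ (∀ i ∉ s, μ i = 0) ∧
          ∑ i ∈ s, μ i • v i = x} := by
      ext x
      simp only [Set.mem_iUnion, Set.mem_setOf_eq]
      constructor
      · rintro ⟨μ, hμ0, hμz, rfl⟩
        obtain ⟨s, hsI, hsli, ν, hν0, hνz, hνsum⟩ :=
          cone_caratheodory v I μ (fun i _ => hμ0 i)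
        exact ⟨s, ⟨hsI, hsli⟩, ν, hν0, hνz, hνsum⟩
      · rintro ⟨s, ⟨hsI, _⟩, μ, hμ0, hμz, rfl⟩
        refine ⟨μ, hμ0, fun i hi => hμz i (fun his => hi (hsI his)), ?_⟩
        exact (Finset.sum_subset hsI fun i _ his => by rw [hμz i his, zero_smul]).symm
    rw [hdecomp]
    exact Set.Finite.isClosed_biUnion (Set.toFinite _)
      (fun s hs => isClosed_cone_of_li v s hs.2)
  have hu : u ∈ K := by
    by_contra hnot
    obtain ⟨f, c, hfK, hfu⟩ := geometric_hahn_banach_closed_point K.convex hKclosed hnot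
    have hc0 : 0 < c := by simpa using hfK 0 hzero
    have hfK0 : ∀ k ∈ (K : Set E), f k ≤ 0 := by
      intro k hk
      by_contra hpos; push_neg at hpos
      have hmem : (c / f k) • k ∈ (K : Set E) := K.smul_mem (div_pos hc0 hpos) hk
      have := hfK _ hmem
      rw [map_smul, smul_eq_mul, div_mul_cancel₀ _ hpos.ne'] at this
      exact lt_irrefl _ this
    set x : E := (InnerProductSpace.toDual ℝ E).symm f with hxdef
    have hx : ∀ z : E, ⟪x, z⟫ = f z := fun z => InnerProductSpace.toDual_symm_apply
    have hvx : ∀ i ∈ I, ⟪v i, x⟫ ≤ 0 := by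
      intro i hi
      have : v i ∈ (K : Set E) := by
        refine ⟨fun j => if j = i then 1 else 0, ?_, ?_, ?_⟩
        · intro j; dsimp only; split_ifs <;> norm_num
        · intro j hj
          simp only [ite_eq_right_iff, one_ne_zero, imp_false]
          intro hji; exact hj (hji ▸ hi)
        · have hcg : ∀ j ∈ I, (if j = i then (1:ℝ) else 0) • v j
              = if j = i then v j else 0 := by
            intro j _; split_ifs <;> simp
          rw [Finset.sum_congr rfl hcg, Finset.sum_ite_eq' I i v, if_pos hi]
      rw [real_inner_comm, hx]; exact hfK0 _ this
    have := h x hvx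
    rw [real_inner_comm, hx] at this
    linarith
  exact hu

theorem transpose_sv_bound {dd : ℕ} (M : Matrix (Fin dd) (Fin dd) ℝ) (hM : IsUnit M)
    {ρ : ℝ} (hρ : 0 < ρ)
    (h : ∀ v : EuclideanSpace ℝ (Fin dd), ρ * ‖v‖ ≤ ‖Matrix.toEuclideanLin M v‖)
    (w : EuclideanSpace ℝ (Fin dd)) : ρ * ‖w‖ ≤ ‖Matrix.toEuclideanLin M.transpose w‖ := by
  have hdet : IsUnit M.det := (Matrix.isUnit_iff_isUnit_det M).mp hM
  have hconj : M.conjTranspose = M.transpose := by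
    ext i j; simp [Matrix.conjTranspose_apply]
  have hadj : ∀ x y : EuclideanSpace ℝ (Fin dd),
      ⟪Matrix.toEuclideanLin M.transpose x, y⟫ = ⟪x, Matrix.toEuclideanLin M y⟫ := by
    intro x y
    rw [← hconj, Matrix.toEuclideanLin_conjTranspose_eq_adjoint]
    exact LinearMap.adjoint_inner_left _ _ _
  set g : EuclideanSpace ℝ (Fin dd) := Matrix.toEuclideanLin M⁻¹ w with hg
  have hfg : Matrix.toEuclideanLin M g = w := by
    rw [hg]
    apply (WithLp.equiv 2 (Fin dd → ℝ)).injective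
    ext i
    simp [Matrix.toEuclideanLin_apply, Matrix.mulVec_mulVec, Matrix.mul_nonsing_inv M hdet,
      Matrix.one_mulVec]
  have h1 : ‖w‖ ^ 2 = ⟪Matrix.toEuclideanLin M.transpose w, g⟫ := by
    rw [hadj, hfg, real_inner_self_eq_norm_sq]
  have h2 : ⟪Matrix.toEuclideanLin M.transpose w, g⟫
      ≤ ‖Matrix.toEuclideanLin M.transpose w‖ * ‖g‖ := real_inner_le_norm _ _
  have h3 : ρ * ‖g‖ ≤ ‖w‖ := by
    have := h g; rwa [hfg] at this
  have hn1 : 0 ≤ ‖w‖ := norm_nonneg _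
  have hn2 : 0 ≤ ‖Matrix.toEuclideanLin M.transpose w‖ := norm_nonneg _
  have hn3 : 0 ≤ ‖g‖ := norm_nonneg _
  rcases eq_or_lt_of_le hn1 with hw0 | hwpos
  · rw [← hw0, mul_zero]; exact hn2
  · have key : ρ * ‖w‖ ^ 2 ≤ ‖Matrix.toEuclideanLin M.transpose w‖ * ‖w‖ := by
      nlinarith [mul_le_mul_of_nonneg_left h3 hn2]
    have := (mul_le_mul_iff_of_pos_right hwpos).mpr (le_refl (ρ * ‖w‖))
    nlinarith

set_option maxHeartbeats 2000000 in
theorem key_step (d m : ℕ) (hd : 0 < d) (hm : 0 < m)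
    (A : Matrix (Fin m) (Fin d) ℝ) (b : Fin m → ℝ)
    (τ ρ : ℝ) (hτ : 0 < τ) (hρ : 0 < ρ)
    (D Dτ : Set (EuclideanSpace ℝ (Fin d)))
    (hD : D = {x : EuclideanSpace ℝ (Fin d) | ∀ i, A.mulVec x i ≤ b i})
    (hDτ : Dτ = {x : EuclideanSpace ℝ (Fin d) | ∀ i, A.mulVec x i + τ ≤ b i})
    (hDne : D.Nonempty) (hDcp : IsCompact D) (hDτne : Dτ.Nonempty)
    (hσ : ∀ B : Fin d → Fin m, Function.Injective B →
        IsUnit (A.submatrix B (id : Fin d → Fin d)) →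
        ∀ v : EuclideanSpace ℝ (Fin d),
          ρ * ‖v‖ ≤ ‖Matrix.toEuclideanLin (A.submatrix B (id : Fin d → Fin d)) v‖) :
    ∀ y ∈ D, ∃ z ∈ Dτ, dist y z ≤ Real.sqrt d / ρ * τ := by
  classical
  intro y hy
  set r : Fin m → EuclideanSpace ℝ (Fin d) :=
    fun i => (WithLp.equiv 2 (Fin d → ℝ)).symm (A i) with hr
  have hinner : ∀ (i : Fin m) (x : EuclideanSpace ℝ (Fin d)), ⟪r i, x⟫ = A.mulVec x i := by
    intro i x
    simp [hr, PiLp.inner_apply, RCLike.inner_apply, starRingEnd_apply,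
      Matrix.mulVec, dotProduct, mul_comm]
  -- basic properties of Dτ
  have hDτsubD : Dτ ⊆ D := by
    rw [hD, hDτ]; intro x hx i; have := hx i; linarith
  have hDτclosed : IsClosed Dτ := by
    rw [hDτ]
    have : {x : EuclideanSpace ℝ (Fin d) | ∀ i, A.mulVec x i + τ ≤ b i}
        = ⋂ i, {x : EuclideanSpace ℝ (Fin d) | ⟪r i, x⟫ ≤ b i - τ} := by
      ext x
      simp only [Set.mem_setOf_eq, Set.mem_iInter]
      constructor
      · intro h i; rw [hinner]; linarith [h i]
      · intro h i; have := h i; rw [hinner] at this; linarith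
    rw [this]
    exact isClosed_iInter fun i =>
      isClosed_le (Continuous.inner continuous_const continuous_id) continuous_const
  have hDτconv : Convex ℝ Dτ := by
    rw [hDτ]
    have : {x : EuclideanSpace ℝ (Fin d) | ∀ i, A.mulVec x i + τ ≤ b i}
        = ⋂ i, {x : EuclideanSpace ℝ (Fin d) | ⟪r i, x⟫ ≤ b i - τ} := by
      ext x
      simp only [Set.mem_setOf_eq, Set.mem_iInter]
      constructor
      · intro h i; rw [hinner]; linarith [h i]
      · intro h i; have := h i; rw [hinner] at this; linarith
    rw [this]
    refine convex_iInter fun i => convex_halfSpace_le ?_ _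
    exact ⟨fun x y => inner_add_right _ _ _, fun c x => real_inner_smul_right _ _ _⟩
  have hDτcp : IsCompact Dτ := IsCompact.of_isClosed_subset hDcp hDτclosed hDτsubD
  obtain ⟨w, hwDτ, hwdist⟩ := hDτcp.exists_infDist_eq_dist hDτne y
  refine ⟨w, hwDτ, ?_⟩
  set u : EuclideanSpace ℝ (Fin d) := y - w with hu
  -- variational inequality
  have hVI : ∀ z ∈ Dτ, ⟪u, z - w⟫ ≤ 0 := by
    have h₁ : ‖y - w‖ = ⨅ z : Dτ, ‖y - ↑z‖ := by
      rw [← dist_eq_norm, ← hwdist, Metric.infDist_eq_iInf]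
      exact iInf_congr fun z => dist_eq_norm _ _
    exact (norm_eq_iInf_iff_real_inner_le_zero hDτconv hwDτ).mp h₁
  -- active set
  set I : Finset (Fin m) := Finset.univ.filter (fun i => A.mulVec w i + τ = b i) with hI
  have hwfeas : ∀ i, A.mulVec w i + τ ≤ b i := by rw [hDτ] at hwDτ; exact hwDτ
  have hactive : ∀ i ∈ I, A.mulVec w i + τ = b i := by
    intro i hi; exact (Finset.mem_filter.mp hi).2
  have hslack : ∀ i ∉ I, A.mulVec w i + τ < b i := by
    intro i hi
    rcases lt_or_eq_of_le (hwfeas i) with h | h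
    · exact h
    · exact absurd (Finset.mem_filter.mpr ⟨Finset.mem_univ i, h⟩) hi
  -- dual characterization hypothesis
  have hfeas : ∀ yv : EuclideanSpace ℝ (Fin d), (∀ i ∈ I, ⟪r i, yv⟫ ≤ 0) → ⟪u, yv⟫ ≤ 0 := by
    intro yv hyv
    haveI : Nonempty (Fin m) := ⟨⟨0, hm⟩⟩
    set g : Fin m → ℝ := fun i => if 0 < A.mulVec yv i ∧ i ∉ I
      then (b i - τ - A.mulVec w i) / A.mulVec yv i else 1 with hg
    set t : ℝ := Finset.univ.inf' Finset.univ_nonempty g with ht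
    have htpos : 0 < t := by
      rw [ht, Finset.lt_inf'_iff]
      intro i _
      rw [hg]; dsimp only
      split_ifs with hcase
      · exact div_pos (by linarith [hslack i hcase.2]) hcase.1
      · norm_num
    have htle : ∀ i, t ≤ g i := fun i => Finset.inf'_le _ (Finset.mem_univ i)
    have hz : w + t • yv ∈ Dτ := by
      rw [hDτ]
      intro i
      have hAdd : A.mulVec (w + t • yv) i = A.mulVec w i + t * A.mulVec yv i := by
        rw [Matrix.mulVec_add, Matrix.mulVec_smul]
        simp
      rw [WithLp.ofLp_add, WithLp.ofLp_smul, hAdd]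
      by_cases hiI : i ∈ I
      · have hci : A.mulVec yv i ≤ 0 := by rw [← hinner]; exact hyv i hiI
        have := hactive i hiI
        nlinarith
      · by_cases hci : 0 < A.mulVec yv i
        · have := htle i
          rw [hg] at this; simp only [hci, hiI, not_false_iff, and_self, if_true] at this
          have := (le_div_iff₀ hci).mp this
          linarith [hwfeas i]
        · push_neg at hci
          nlinarith [hwfeas i]
    have := hVI _ hz
    rw [add_sub_cancel_left, inner_smul_right] at this
    nlinarith
  -- Farkas + Caratheodory
  obtain ⟨μ, hμ0, hμz, hμsum⟩ := farkas_cone r I u hfeas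
  obtain ⟨s, hsI, hsli, ν, hν0, hνz, hνsum⟩ := cone_caratheodory r I μ (fun i _ => hμ0 i)
  have hνu : ∑ i ∈ s, ν i • r i = u := by rw [hνsum, hμsum]
  -- rows span
  have hspan : Submodule.span ℝ (Set.range r) = ⊤ := by
    by_contra hne
    have hne' : (Submodule.span ℝ (Set.range r))ᗮ ≠ ⊥ := by
      rwa [Ne, Submodule.orthogonal_eq_bot_iff]
    obtain ⟨v, hvmem, hv0⟩ := Submodule.exists_mem_ne_zero_of_ne_bot hne'
    obtain ⟨x₀, hx₀⟩ := hDne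
    have hvr : ∀ i, A.mulVec v i = 0 := by
      intro i
      rw [← hinner]
      exact hvmem _ (Submodule.subset_span (Set.mem_range_self i))
    have hray : ∀ t : ℝ, x₀ + t • v ∈ D := by
      intro t
      rw [hD]
      intro i
      have : A.mulVec (x₀ + t • v) i = A.mulVec x₀ i + t * A.mulVec v i := by
        rw [Matrix.mulVec_add, Matrix.mulVec_smul]; simp
      rw [WithLp.ofLp_add, WithLp.ofLp_smul, this, hvr i, mul_zero, add_zero]
      rw [hD] at hx₀; exact hx₀ i
    obtain ⟨R, hR⟩ := isBounded_iff_forall_norm_le.mp hDcp.isBounded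
    have hvpos : 0 < ‖v‖ := norm_pos_iff.mpr hv0
    set t0 : ℝ := (R + ‖x₀‖ + 1) / ‖v‖ with ht0
    have hRx : 0 ≤ R := le_trans (norm_nonneg x₀) (hR x₀ hx₀)
    have ht0pos : 0 ≤ t0 := div_nonneg (by linarith [norm_nonneg x₀]) hvpos.le
    have h1 : ‖x₀ + t0 • v‖ ≤ R := hR _ (hray t0)
    have h2 : ‖t0 • v‖ - ‖x₀‖ ≤ ‖x₀ + t0 • v‖ := by
      have := norm_add_le (x₀ + t0 • v) (-x₀)
      simp only [add_neg_cancel_comm, norm_neg] at this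
      linarith
    rw [norm_smul, Real.norm_eq_abs, abs_of_nonneg ht0pos, ht0,
      div_mul_cancel₀ _ hvpos.ne'] at h2
    linarith
  -- extend to a basis
  have hsliSet : LinearIndependent ℝ (Subtype.val : ↑(r '' ↑s) → EuclideanSpace ℝ (Fin d)) := by
    rw [Set.image_eq_range]; exact hsli.linearIndepOn_id
  obtain ⟨bs, hbs_sub, hs_bs, hspan_bs, hbs_li'⟩ :=
    exists_linearIndepOn_id_extension hsliSet (Set.image_subset_range r ↑s)
  have hbs_li : LinearIndependent ℝ (Subtype.val : ↥bs → EuclideanSpace ℝ (Fin d)) := hbs_li'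
  have hbs_top : Submodule.span ℝ bs = ⊤ := by
    have h1 : Submodule.span ℝ (Set.range r) ≤ Submodule.span ℝ bs :=
      Submodule.span_le.mpr hspan_bs
    rw [hspan] at h1
    exact top_unique h1
  haveI : Fintype ↥bs := ((Set.finite_range r).subset hbs_sub).fintype
  let basisB : Module.Basis ↥bs ℝ (EuclideanSpace ℝ (Fin d)) :=
    Module.Basis.mk hbs_li (by rw [Subtype.range_coe]; exact hbs_top.ge)
  have hcard : Fintype.card ↥bs = d := by
    rw [← Module.finrank_eq_card_basis basisB, finrank_euclideanSpace_fin]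
  let e : Fin d ≃ ↥bs := (Fintype.equivFinOfCardEq hcard).symm
  have hBex : ∀ j : Fin d, ∃ i : Fin m, r i = ↑(e j) := fun j => hbs_sub (e j).2
  set B : Fin d → Fin m := fun j => (hBex j).choose with hB
  have hBr : ∀ j, r (B j) = ↑(e j) := fun j => (hBex j).choose_spec
  have hBinj : Function.Injective B := by
    intro j j' hjj'
    have : (↑(e j) : EuclideanSpace ℝ (Fin d)) = ↑(e j') := by rw [← hBr, ← hBr, hjj']
    exact e.injective (Subtype.ext this)
  set M : Matrix (Fin d) (Fin d) ℝ := A.submatrix B (id : Fin d → Fin d) with hM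
  have hrowsli : LinearIndependent ℝ (fun j : Fin d => r (B j)) := by
    have heq : (fun j : Fin d => r (B j))
        = (Subtype.val ∘ e : Fin d → EuclideanSpace ℝ (Fin d)) := funext hBr
    rw [heq]
    exact hbs_li.comp e e.injective
  have hMunit : IsUnit M := by
    have hmap := hrowsli.map' (WithLp.linearEquiv 2 ℝ (Fin d → ℝ)).toLinearMap
      (LinearEquiv.ker _)
    have heq2 : (⇑(WithLp.linearEquiv 2 ℝ (Fin d → ℝ)).toLinearMap ∘ (fun j => r (B j)))
        = fun j : Fin d => M j := by
      funext j; funext k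
      simp [hM, hr, Matrix.submatrix_apply]
    rw [heq2] at hmap
    exact Matrix.linearIndependent_rows_iff_isUnit.mp hmap
  -- fibers over basis map
  set G : Fin m → Fin d := fun i => if h : r i ∈ bs then e.symm ⟨r i, h⟩ else ⟨0, hd⟩ with hG
  have hGs : ∀ i ∈ s, (↑(e (G i)) : EuclideanSpace ℝ (Fin d)) = r i := by
    intro i hi
    have hrbs : r i ∈ bs := hs_bs (Set.mem_image_of_mem r hi)
    rw [hG]; dsimp only; rw [dif_pos hrbs]
    simp
  set ν' : Fin d → ℝ := fun j => ∑ i ∈ s.filter (fun i => G i = j), ν i with hν'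
  have hν'0 : ∀ j, 0 ≤ ν' j := fun j => Finset.sum_nonneg fun i _ => hν0 i
  have hfiber_row : ∀ j, ∀ i ∈ s.filter (fun i => G i = j), r (B j) = r i := by
    intro j i hi
    obtain ⟨his, hGi⟩ := Finset.mem_filter.mp hi
    rw [hBr j, ← hGi, hGs i his]
  have hν'sum : ∑ j : Fin d, ν' j • r (B j) = u := by
    rw [← hνu, ← Finset.sum_fiberwise s G (fun i => ν i • r i)]
    refine Finset.sum_congr rfl fun j _ => ?_
    rw [hν', Finset.sum_smul]
    exact Finset.sum_congr rfl fun i hi => by rw [hfiber_row j i hi]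
  -- inner bound for active rows
  have hrowbound : ∀ i ∈ s, ⟪r i, u⟫ ≤ τ := by
    intro i hi
    have hiI : i ∈ I := hsI hi
    have h1 : A.mulVec y i ≤ b i := by rw [hD] at hy; exact hy i
    have h2 : A.mulVec w i = b i - τ := by linarith [hactive i hiI]
    have : ⟪r i, u⟫ = A.mulVec y i - A.mulVec w i := by
      rw [hu, inner_sub_right, hinner, hinner]
    rw [this, h2]
    linarith
  -- apply hσ through the transpose
  set ν'E : EuclideanSpace ℝ (Fin d) := (WithLp.equiv 2 (Fin d → ℝ)).symm ν' with hν'E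
  have hMT : Matrix.toEuclideanLin M.transpose ν'E = u := by
    rw [← hν'sum]
    ext k
    have h1 : (∑ j : Fin d, ν' j • r (B j)) k = ∑ j : Fin d, ν' j * A (B j) k := by
      rw [WithLp.ofLp_sum, Finset.sum_apply k Finset.univ (fun j => (ν' j • r (B j)).ofLp)]
      refine Finset.sum_congr rfl fun j _ => ?_
      simp [hr, PiLp.toLp_apply, WithLp.equiv_symm_apply]
    rw [h1]
    simp only [Matrix.toEuclideanLin_apply, PiLp.toLp_apply, WithLp.equiv_symm_apply, hν'E]
    rw [Matrix.mulVec, dotProduct]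
    refine Finset.sum_congr rfl fun j _ => ?_
    simp [Matrix.transpose_apply, hM, Matrix.submatrix_apply, WithLp.equiv_apply,
      mul_comm]
  have htrans : ρ * ‖ν'E‖ ≤ ‖u‖ := by
    have := transpose_sv_bound M hMunit hρ (hσ B hBinj hMunit) ν'E
    rwa [hMT] at this
  -- ℓ¹–ℓ² bound
  have hl1 : ∑ j : Fin d, ν' j ≤ Real.sqrt d * ‖ν'E‖ := by
    set ones : EuclideanSpace ℝ (Fin d) := (WithLp.equiv 2 (Fin d → ℝ)).symm (fun _ => 1)
      with hones
    have hinner1 : ⟪ν'E, ones⟫ = ∑ j : Fin d, ν' j := by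
      simp [PiLp.inner_apply, RCLike.inner_apply, starRingEnd_apply, hones, hν'E,
        PiLp.toLp_apply, WithLp.equiv_symm_apply]
    have hnorm1 : ‖ones‖ = Real.sqrt d := by
      rw [hones, EuclideanSpace.norm_eq]; simp
    have := real_inner_le_norm ν'E ones
    rw [hinner1, hnorm1] at this
    nlinarith [norm_nonneg ν'E]
  -- quadratic bound
  have hquad : ‖u‖ ^ 2 ≤ τ * ∑ j : Fin d, ν' j := by
    have h1 : ‖u‖ ^ 2 = ⟪u, u⟫ := (real_inner_self_eq_norm_sq u).symm
    have h2 : ⟪u, u⟫ = ∑ j : Fin d, ν' j * ⟪r (B j), u⟫ := by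
      nth_rewrite 1 [← hν'sum]
      rw [sum_inner]
      exact Finset.sum_congr rfl fun j _ => real_inner_smul_left _ _ _
    have h3 : ∀ j : Fin d, ν' j * ⟪r (B j), u⟫ ≤ ν' j * τ := by
      intro j
      rcases Finset.eq_empty_or_nonempty (s.filter (fun i => G i = j)) with hemp | ⟨i, hi⟩
      · have hz0 : ν' j = 0 := by
          show (∑ i ∈ s.filter (fun i => G i = j), ν i) = 0
          rw [hemp, Finset.sum_empty]
        rw [hz0, zero_mul, zero_mul]
      · have hru : ⟪r (B j), u⟫ ≤ τ := by
          rw [hfiber_row j i hi]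
          exact hrowbound i (Finset.mem_filter.mp hi).1
        exact mul_le_mul_of_nonneg_left hru (hν'0 j)
    calc ‖u‖ ^ 2 = ∑ j : Fin d, ν' j * ⟪r (B j), u⟫ := by rw [h1, h2]
      _ ≤ ∑ j : Fin d, ν' j * τ := Finset.sum_le_sum fun j _ => h3 j
      _ = τ * ∑ j : Fin d, ν' j := by rw [← Finset.sum_mul, mul_comm]
  -- conclude
  have hdist : dist y w = ‖u‖ := by rw [hu, dist_eq_norm]
  rw [hdist]
  have hsd : 0 ≤ Real.sqrt d := Real.sqrt_nonneg d
  rcases eq_or_lt_of_le (norm_nonneg u) with hu0 | hupos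
  · rw [← hu0]
    positivity
  · have hchain : ρ * ‖u‖ ^ 2 ≤ τ * Real.sqrt d * ‖u‖ := by
      have c1 : ρ * ‖u‖ ^ 2 ≤ ρ * (τ * ∑ j : Fin d, ν' j) :=
        mul_le_mul_of_nonneg_left hquad hρ.le
      have c2 : ρ * (τ * ∑ j : Fin d, ν' j) ≤ ρ * (τ * (Real.sqrt d * ‖ν'E‖)) := by
        have := mul_le_mul_of_nonneg_left hl1 hτ.le
        exact mul_le_mul_of_nonneg_left this hρ.le
      have c3 : ρ * (τ * (Real.sqrt d * ‖ν'E‖)) = τ * Real.sqrt d * (ρ * ‖ν'E‖) := by ring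
      have c4 : τ * Real.sqrt d * (ρ * ‖ν'E‖) ≤ τ * Real.sqrt d * ‖u‖ :=
        mul_le_mul_of_nonneg_left htrans (by positivity)
      linarith
    have : ρ * ‖u‖ ≤ τ * Real.sqrt d := by
      refine le_of_mul_le_mul_right ?_ hupos
      nlinarith [hchain]
    rw [div_mul_eq_mul_div, le_div_iff₀ hρ]
    nlinarith

/-- For a nonempty compact polytope `D = {x | A x ≤ b}` whose τ-shrunk version
`D_τ = {x | A x + τ·𝟙 ≤ b}` is nonempty, if `ρ > 0` lower-bounds the smallest singular value of
every `d × d` invertible submatrix `A_B` of `A` corresponding to `d` constraints meeting at an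
active point of `D` (expressed as `ρ‖v‖ ≤ ‖A_B v‖` for all `v`, in Euclidean norm), then every
`x ∈ ℝ^d` satisfies `dist(x, D_τ) ≤ dist(x, D) + (√d / ρ) τ`. -/
theorem dist_shrunk_le_dist_add
    (d m : ℕ) (A : Matrix (Fin m) (Fin d) ℝ) (b : Fin m → ℝ)
    (τ ρ : ℝ) (hτ : 0 < τ) (hρ : 0 < ρ)
    (D Dτ : Set (EuclideanSpace ℝ (Fin d)))
    (hD : D = {x : EuclideanSpace ℝ (Fin d) | ∀ i, A.mulVec x i ≤ b i})
    (hDτ : Dτ = {x : EuclideanSpace ℝ (Fin d) | ∀ i, A.mulVec x i + τ ≤ b i})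
    (hDne : D.Nonempty) (hDcp : IsCompact D) (hDτne : Dτ.Nonempty)
    (hσ : ∀ B : Fin d → Fin m, Function.Injective B →
        IsUnit (A.submatrix B (id : Fin d → Fin d)) →
        ∀ v : EuclideanSpace ℝ (Fin d),
          ρ * ‖v‖ ≤ ‖Matrix.toEuclideanLin (A.submatrix B (id : Fin d → Fin d)) v‖) :
    ∀ x : EuclideanSpace ℝ (Fin d),
      Metric.infDist x Dτ ≤ Metric.infDist x D + (Real.sqrt d / ρ) * τ := by
  intro x
  have hrhs : 0 ≤ Real.sqrt d / ρ * τ := by positivity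
  have hDτclosed' : Dτ.Nonempty := hDτne
  rcases Nat.eq_zero_or_pos d with hd0 | hd
  · -- dimension zero: all points coincide
    obtain ⟨z, hz⟩ := hDτne
    have hxz : x = z := by
      subst hd0
      ext i
      exact absurd i.isLt (by omega)
    have hd0' : dist x z = 0 := by rw [hxz, dist_self]
    have : Metric.infDist x Dτ ≤ dist x z := Metric.infDist_le_dist_of_mem hz
    rw [hd0'] at this
    have h0 : 0 ≤ Metric.infDist x D := Metric.infDist_nonneg
    linarith
  rcases Nat.eq_zero_or_pos m with hm0 | hm
  · -- no constraints: Dτ is everything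
    have hx : x ∈ Dτ := by
      rw [hDτ]
      intro i
      subst hm0
      exact absurd i.isLt (by omega)
    rw [Metric.infDist_zero_of_mem hx]
    have h0 : 0 ≤ Metric.infDist x D := Metric.infDist_nonneg
    linarith
  obtain ⟨yD, hyD, hyDdist⟩ := hDcp.exists_infDist_eq_dist hDne x
  obtain ⟨z, hzDτ, hzdist⟩ := key_step d m hd hm A b τ ρ hτ hρ D Dτ hD hDτ hDne hDcp hDτne hσ
    yD hyD
  calc Metric.infDist x Dτ ≤ dist x z := Metric.infDist_le_dist_of_mem hzDτ
    _ ≤ dist x yD + dist yD z := dist_triangle _ _ _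
    _ ≤ Metric.infDist x D + Real.sqrt d / ρ * τ := by
        rw [hyDdist]; linarith
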